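/- For all integers m ≥ 0, d ≥ 2 and n ≥ 0, one has υ_{m,n} ≤ ∏_{j=0}^{n-1} υ_{m+j,1}, where υ_{m,n} = Σ_{I ⊆ ℕ₊, |I|=n} ∏_{k∈I} 1/((m+k)(m+d-1+k)). -/
import Mathlib


open scoped BigOperators

/-- υ_{m,n}: sum over n-element subsets of the positive integers of
∏_{k∈I} 1/((m+k)(m+d-1+k)). -/
noncomputable def upsilon (d m n : ℕ) : ℝ :=
  ∑' I : {s : Finset ℕ // s.card = n ∧ ∀ k ∈ s, 0 < k},
    ∏ k ∈ I.1, (1 : ℝ) / ((m + k) * (m + d - 1 + k))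

/-- The summand. -/
noncomputable def upsG (d m k : ℕ) : ℝ :=
  (1 : ℝ) / ((m + k) * (m + d - 1 + k))

lemma upsilon_eq (d m n : ℕ) :
    upsilon d m n =
      ∑' I : {s : Finset ℕ // s.card = n ∧ ∀ k ∈ s, 0 < k},
        ∏ k ∈ I.1, upsG d m k := rfl

lemma upsG_nonneg (d m k : ℕ) (hd : 2 ≤ d) : 0 ≤ upsG d m k := by
  have h2 : (2 : ℝ) ≤ d := by exact_mod_cast hd
  have h1 : (0 : ℝ) ≤ (m : ℝ) + k := by positivity
  have h2' : (0 : ℝ) ≤ (m : ℝ) + d - 1 + k := by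
    have hm : (0:ℝ) ≤ (m:ℝ) := by positivity
    have hk : (0:ℝ) ≤ (k:ℝ) := by positivity
    linarith
  exact one_div_nonneg.2 (mul_nonneg h1 h2')

lemma upsG_shift (d m i l : ℕ) : upsG d m (i + l) = upsG d (m + i) l := by
  unfold upsG
  push_cast
  ring_nf

lemma upsG_summable (d m : ℕ) (hd : 2 ≤ d) :
    Summable (fun k : ℕ => upsG d m (k + 1)) := by
  have hs : Summable (fun k : ℕ => 1 / ((k : ℝ) + 1) ^ 2) := by
    have := (summable_nat_add_iff 1).mpr <|
      Real.summable_one_div_nat_pow.mpr one_lt_two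
    simpa using this
  refine Summable.of_nonneg_of_le (fun k => upsG_nonneg d m (k+1) hd) (fun k => ?_) hs
  unfold upsG
  have h2 : (2 : ℝ) ≤ d := by exact_mod_cast hd
  have hm : (0 : ℝ) ≤ (m : ℝ) := by positivity
  have hk : (0 : ℝ) ≤ (k : ℝ) := by positivity
  have hpos : (0 : ℝ) < ((k : ℝ) + 1) ^ 2 := by positivity
  have hle : ((k : ℝ) + 1) ^ 2 ≤ ((m : ℝ) + ↑(k + 1)) * ((m : ℝ) + d - 1 + ↑(k + 1)) := by
    push_cast
    nlinarith
  exact one_div_le_one_div_of_le hpos hle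

/-- Singleton sets indexed by positive integers. -/
def upsSing (k : ℕ) : {s : Finset ℕ // s.card = 1 ∧ ∀ j ∈ s, 0 < j} :=
  ⟨{k + 1}, by simp, by intro x hx; simp at hx; omega⟩

lemma upsSing_bij : Function.Bijective upsSing := by
  constructor
  · intro a b hab
    have h := congrArg (fun I => I.1) hab
    simp only [upsSing] at h
    have := Finset.singleton_injective h
    omega
  · rintro ⟨s, hc, hp⟩
    obtain ⟨a, rfl⟩ := Finset.card_eq_one.mp hc
    have ha : 0 < a := hp a (by simp)
    refine ⟨a - 1, ?_⟩
    apply Subtype.ext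
    simp only [upsSing]
    congr 1
    omega

lemma upsilon_one_eq (d M : ℕ) :
    upsilon d M 1 = ∑' k : ℕ, upsG d M (k + 1) := by
  rw [upsilon_eq, ← Equiv.tsum_eq (Equiv.ofBijective upsSing upsSing_bij)]
  exact tsum_congr fun k => by
    show ∏ j ∈ ({k + 1} : Finset ℕ), upsG d M j = _
    rw [Finset.prod_singleton]

lemma upsilon_one_nonneg (d M : ℕ) (hd : 2 ≤ d) : 0 ≤ upsilon d M 1 := by
  rw [upsilon_one_eq]
  exact tsum_nonneg fun k => upsG_nonneg d M (k + 1) hd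

/-- The "gap" encoding of an n-element set of positive integers. -/
def upsPhi (n : ℕ) (I : {s : Finset ℕ // s.card = n ∧ ∀ k ∈ s, 0 < k}) : Fin n → ℕ :=
  fun i => I.1.orderEmbOfFin I.2.1 i - i

lemma upsPhi_ge (n : ℕ) (I : {s : Finset ℕ // s.card = n ∧ ∀ k ∈ s, 0 < k}) (i : Fin n) :
    (i : ℕ) + 1 ≤ I.1.orderEmbOfFin I.2.1 i := by
  obtain ⟨s, hc, hp⟩ := I
  set e := s.orderEmbOfFin hc with he
  have hpos : ∀ j : Fin n, 1 ≤ e j := fun j => hp _ (s.orderEmbOfFin_mem hc j)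
  obtain ⟨v, hv⟩ := i
  induction v with
  | zero => simpa using hpos ⟨0, hv⟩
  | succ w ih =>
    have h1 := ih (lt_trans (Nat.lt_succ_self w) hv)
    have h2 : e ⟨w, lt_trans (Nat.lt_succ_self w) hv⟩ < e ⟨w + 1, hv⟩ :=
      e.strictMono (by simp [Fin.lt_def])
    simp only [Fin.val_mk] at h1 ⊢
    omega

lemma upsPhi_add (n : ℕ) (I : {s : Finset ℕ // s.card = n ∧ ∀ k ∈ s, 0 < k}) (i : Fin n) :
    (i : ℕ) + upsPhi n I i = I.1.orderEmbOfFin I.2.1 i := by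
  have := upsPhi_ge n I i
  unfold upsPhi
  omega

lemma upsPhi_pos (n : ℕ) (I : {s : Finset ℕ // s.card = n ∧ ∀ k ∈ s, 0 < k}) (i : Fin n) :
    1 ≤ upsPhi n I i := by
  have := upsPhi_ge n I i
  unfold upsPhi
  omega

lemma ups_img (n : ℕ) (I : {s : Finset ℕ // s.card = n ∧ ∀ k ∈ s, 0 < k}) :
    I.1 = Finset.image (fun i => I.1.orderEmbOfFin I.2.1 i) Finset.univ := by
  apply Finset.coe_injective
  simp [Finset.range_orderEmbOfFin]

lemma upsPhi_inj (n : ℕ) : Function.Injective (upsPhi n) := by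
  intro I J h
  have heq : ∀ i : Fin n, (I.1.orderEmbOfFin I.2.1 i : ℕ) = J.1.orderEmbOfFin J.2.1 i := by
    intro i
    have h1 := upsPhi_add n I i
    have h2 := upsPhi_add n J i
    have h3 : upsPhi n I i = upsPhi n J i := congrFun h i
    omega
  apply Subtype.ext
  rw [ups_img n I, ups_img n J]
  exact Finset.image_congr fun i _ => heq i

theorem upsilon_le_prod_upsilon_one (d m n : ℕ) (hd : 2 ≤ d) :
    upsilon d m n ≤ ∏ j ∈ Finset.range n, upsilon d (m + j) 1 := by

  have hRnn : 0 ≤ ∏ j ∈ Finset.range n, upsilon d (m + j) 1 :=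
    Finset.prod_nonneg fun j _ => upsilon_one_nonneg d (m + j) hd
  rw [upsilon_eq]
  refine tsum_le_of_sum_le' hRnn ?_
  intro S
  have hterm : ∀ I : {s : Finset ℕ // s.card = n ∧ ∀ k ∈ s, 0 < k},
      ∏ k ∈ I.1, upsG d m k = ∏ i : Fin n, upsG d (m + i) (upsPhi n I i) := by
    intro I
    conv_lhs => rw [ups_img n I]
    rw [Finset.prod_image (fun x _ y _ h => (I.1.orderEmbOfFin I.2.1).injective h)]
    refine Finset.prod_congr rfl fun i _ => ?_
    rw [← upsPhi_add n I i, upsG_shift]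
  have hBpos : ∀ j : Fin n, ∀ l ∈ (S.map ⟨upsPhi n, upsPhi_inj n⟩).image (fun f => f j), 1 ≤ l := by
    intro j l hl
    simp only [Finset.mem_image, Finset.mem_map, Function.Embedding.coeFn_mk] at hl
    obtain ⟨f, ⟨I, _, rfl⟩, rfl⟩ := hl
    exact upsPhi_pos n I j
  calc ∑ I ∈ S, ∏ k ∈ I.1, upsG d m k
      = ∑ I ∈ S, ∏ i : Fin n, upsG d (m + i) (upsPhi n I i) :=
        Finset.sum_congr rfl fun I _ => hterm I
    _ = ∑ f ∈ S.map ⟨upsPhi n, upsPhi_inj n⟩, ∏ i : Fin n, upsG d (m + i) (f i) :=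
        (Finset.sum_map S ⟨upsPhi n, upsPhi_inj n⟩
          (fun v => ∏ i : Fin n, upsG d (m + i) (v i))).symm
    _ ≤ ∑ f ∈ Fintype.piFinset (fun j => (S.map ⟨upsPhi n, upsPhi_inj n⟩).image (fun f => f j)),
          ∏ i : Fin n, upsG d (m + i) (f i) := by
        refine Finset.sum_le_sum_of_subset_of_nonneg ?_ fun f _ _ =>
          Finset.prod_nonneg fun i _ => upsG_nonneg _ _ _ hd
        intro f hf
        rw [Fintype.mem_piFinset]
        intro j
        exact Finset.mem_image.mpr ⟨f, hf, rfl⟩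
    _ = ∏ j : Fin n, ∑ l ∈ (S.map ⟨upsPhi n, upsPhi_inj n⟩).image (fun f => f j),
          upsG d (m + j) l :=
        (Finset.prod_univ_sum _ _).symm
    _ ≤ ∏ j : Fin n, upsilon d (m + j) 1 := by
        refine Finset.prod_le_prod (fun j _ => Finset.sum_nonneg fun l _ =>
          upsG_nonneg _ _ _ hd) (fun j _ => ?_)
        rw [upsilon_one_eq]
        have hinj : ∀ x ∈ (S.map ⟨upsPhi n, upsPhi_inj n⟩).image (fun f => f j),
            ∀ y ∈ (S.map ⟨upsPhi n, upsPhi_inj n⟩).image (fun f => f j),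
            x - 1 = y - 1 → x = y := by
          intro x hx y hy hxy
          have hx1 := hBpos j x hx
          have hy1 := hBpos j y hy
          omega
        have hkey : ∑ k ∈ ((S.map ⟨upsPhi n, upsPhi_inj n⟩).image (fun f => f j)).image
                (fun l => l - 1), upsG d (m + j) (k + 1)
            = ∑ l ∈ (S.map ⟨upsPhi n, upsPhi_inj n⟩).image (fun f => f j), upsG d (m + j) l := by
          rw [Finset.sum_image hinj]
          refine Finset.sum_congr rfl fun l hl => ?_
          have := hBpos j l hl
          congr 1
          omega
        rw [← hkey]
        exact Summable.sum_le_tsum _ (fun k _ => upsG_nonneg _ _ _ hd) (upsG_summable d (m + j) hd)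
    _ = ∏ j ∈ Finset.range n, upsilon d (m + j) 1 :=
        Fin.prod_univ_eq_prod_range (fun j => upsilon d (m + j) 1) n
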